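/- Let x₁, x₂ be positive reals with x₁ < x₂ and √5·x₁ > x₂. For any nonnegative integer n, the polynomial Q_n(y) = √5(n+x₁)((n+x₂)²+y²)² - (n+x₂)((n+x₁)²+y²)², viewed as a polynomial in y, is positive for all real y. -/

import Mathlib

theorem stmt_5 (x₁ x₂ : ℝ) (hx₁ : 0 < x₁) (hlt : x₁ < x₂)
    (h5 : Real.sqrt 5 * x₁ > x₂) (n : ℕ) (y : ℝ) :
    0 < Real.sqrt 5 * (n + x₁) * ((n + x₂) ^ 2 + y ^ 2) ^ 2 -
        (n + x₂) * ((n + x₁) ^ 2 + y ^ 2) ^ 2 := by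
  have hs1 : (1 : ℝ) ≤ Real.sqrt 5 := by
    rw [show (1:ℝ) = Real.sqrt 1 by simp]
    exact Real.sqrt_le_sqrt (by norm_num)
  set a : ℝ := (n : ℝ) + x₁ with ha
  set b : ℝ := (n : ℝ) + x₂ with hb
  have hn : (0:ℝ) ≤ (n:ℝ) := Nat.cast_nonneg n
  have ha0 : 0 < a := by positivity
  have hab : a < b := by simp [ha, hb]; linarith
  have hkey : b < Real.sqrt 5 * a := by
    have : (n:ℝ) ≤ Real.sqrt 5 * n := by nlinarith
    simp only [ha, hb]; nlinarith
  have hb0 : 0 < b := lt_trans ha0 hab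
  have hq : 0 < b ^ 2 + y ^ 2 := add_pos_of_pos_of_nonneg (pow_pos hb0 2) (sq_nonneg y)
  have h1 : b * (a ^ 2 + y ^ 2) ^ 2 ≤ b * (b ^ 2 + y ^ 2) ^ 2 := by
    have hm : a ^ 2 + y ^ 2 ≤ b ^ 2 + y ^ 2 := by nlinarith
    have h12 : (a ^ 2 + y ^ 2) ^ 2 ≤ (b ^ 2 + y ^ 2) ^ 2 :=
      pow_le_pow_left₀ (by positivity) hm 2
    nlinarith
  have h2 : b * (b ^ 2 + y ^ 2) ^ 2 < Real.sqrt 5 * a * (b ^ 2 + y ^ 2) ^ 2 := by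
    have hp : 0 < (b ^ 2 + y ^ 2) ^ 2 := pow_pos hq 2
    nlinarith
  linarith
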